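/- Let κ₁ and κ₂ be the 3×3 stochastic matrices with rows (1/3, 2/3, 0), (0, 1/3, 2/3), (2/3, 0, 1/3) and (2/3, 1/3, 0), (0, 2/3, 1/3), (1/3, 0, 2/3) respectively. Then the intersection Z_{κ₁} ∩ Z_{κ₂} is not centrally symmetric-generated: it is not equal to Z_μ for any row-stochastic matrix μ with 3-element domain. -/

import Mathlib

def IsStochastic {X Y : Type*} [Fintype Y] (κ : Matrix X Y ℝ) : Prop :=
  (∀ x y, 0 ≤ κ x y) ∧ ∀ x, ∑ y, κ x y = 1

def zonotope {X Y : Type*} [Fintype Y] (κ : Matrix X Y ℝ) : Set (X → ℝ) :=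
  {v | ∃ a : Y → ℝ, (∀ y, a y ∈ Set.Icc (0:ℝ) 1) ∧ v = κ.mulVec a}

noncomputable def κ₁ : Matrix (Fin 3) (Fin 3) ℝ :=
  !![1/3, 2/3, 0; 0, 1/3, 2/3; 2/3, 0, 1/3]

noncomputable def κ₂ : Matrix (Fin 3) (Fin 3) ℝ :=
  !![2/3, 1/3, 0; 0, 2/3, 1/3; 1/3, 0, 2/3]

/-- Bounds valid on the triangular face `{p ∈ Z₁ ∩ Z₂ : p 0 - 2 p 1 + 4 p 2 = 3}`. -/
lemma face_bounds (p : Fin 3 → ℝ)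
    (h1 : p ∈ zonotope κ₁) (h2 : p ∈ zonotope κ₂)
    (hf : p 0 - 2 * p 1 + 4 * p 2 = 3) :
    2 ≤ p 0 + 2 * p 2 ∧ p 0 ≤ p 2 ∧ 4 * p 2 - p 0 ≤ 3 := by
  obtain ⟨a, ha, hpa⟩ := h1
  obtain ⟨b, hb, hpb⟩ := h2
  have ea0 := congrFun hpa 0
  have ea1 := congrFun hpa 1
  have ea2 := congrFun hpa 2
  have eb0 := congrFun hpb 0
  have eb1 := congrFun hpb 1
  have eb2 := congrFun hpb 2
  simp [κ₁, Matrix.mulVec, dotProduct, Fin.sum_univ_three, Matrix.vecHead, Matrix.vecTail] at ea0 ea1 ea2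
  simp [κ₂, Matrix.mulVec, dotProduct, Fin.sum_univ_three, Matrix.vecHead, Matrix.vecTail] at eb0 eb1 eb2
  obtain ⟨ha0, ha0'⟩ := ha 0
  obtain ⟨ha1, ha1'⟩ := ha 1
  obtain ⟨ha2, ha2'⟩ := ha 2
  obtain ⟨hb0, hb0'⟩ := hb 0
  obtain ⟨hb1, hb1'⟩ := hb 1
  obtain ⟨hb2, hb2'⟩ := hb 2
  refine ⟨by linarith, by linarith, by linarith⟩

lemma max_on_Z1 (p : Fin 3 → ℝ) (h1 : p ∈ zonotope κ₁) :
    p 0 - 2 * p 1 + 4 * p 2 ≤ 3 := by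
  obtain ⟨a, ha, hpa⟩ := h1
  have ea0 := congrFun hpa 0
  have ea1 := congrFun hpa 1
  have ea2 := congrFun hpa 2
  simp [κ₁, Matrix.mulVec, dotProduct, Fin.sum_univ_three, Matrix.vecHead, Matrix.vecTail] at ea0 ea1 ea2
  obtain ⟨ha0, ha0'⟩ := ha 0
  linarith

lemma memP1 : ![(2:ℝ)/3, 1/6, 2/3] ∈ zonotope κ₁ := by
  refine ⟨![1, 1/2, 0], ?_, ?_⟩
  · intro y; fin_cases y <;> constructor <;> norm_num
  · funext i; fin_cases i <;>
      norm_num [κ₁, Matrix.mulVec, dotProduct, Fin.sum_univ_three, Matrix.cons_val_two]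

lemma memP2 : ![(2:ℝ)/3, 1/6, 2/3] ∈ zonotope κ₂ := by
  refine ⟨![1, 0, 1/2], ?_, ?_⟩
  · intro y; fin_cases y <;> constructor <;> norm_num
  · funext i; fin_cases i <;>
      norm_num [κ₂, Matrix.mulVec, dotProduct, Fin.sum_univ_three, Matrix.cons_val_two]

lemma memQ1 : ![(1:ℝ)/3, 1/3, 5/6] ∈ zonotope κ₁ := by
  refine ⟨![1, 0, 1/2], ?_, ?_⟩
  · intro y; fin_cases y <;> constructor <;> norm_num
  · funext i; fin_cases i <;>
      norm_num [κ₁, Matrix.mulVec, dotProduct, Fin.sum_univ_three, Matrix.cons_val_two]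

lemma memQ2 : ![(1:ℝ)/3, 1/3, 5/6] ∈ zonotope κ₂ := by
  refine ⟨![1/2, 0, 1], ?_, ?_⟩
  · intro y; fin_cases y <;> constructor <;> norm_num
  · funext i; fin_cases i <;>
      norm_num [κ₂, Matrix.mulVec, dotProduct, Fin.sum_univ_three, Matrix.cons_val_two]

lemma memR1 : ![(1:ℝ), 1, 1] ∈ zonotope κ₁ := by
  refine ⟨![1, 1, 1], ?_, ?_⟩
  · intro y; fin_cases y <;> constructor <;> norm_num
  · funext i; fin_cases i <;>
      norm_num [κ₁, Matrix.mulVec, dotProduct, Fin.sum_univ_three, Matrix.cons_val_two]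

lemma memR2 : ![(1:ℝ), 1, 1] ∈ zonotope κ₂ := by
  refine ⟨![1, 1, 1], ?_, ?_⟩
  · intro y; fin_cases y <;> constructor <;> norm_num
  · funext i; fin_cases i <;>
      norm_num [κ₂, Matrix.mulVec, dotProduct, Fin.sum_univ_three, Matrix.cons_val_two]

theorem intersection_not_a_zonotope :
    ¬ ∃ (n : ℕ) (μ : Matrix (Fin 3) (Fin n) ℝ),
        IsStochastic μ ∧ zonotope κ₁ ∩ zonotope κ₂ = zonotope μ := by
  rintro ⟨n, μ, hμ, heq⟩
  set F : (Fin 3 → ℝ) → ℝ := fun p => p 0 - 2 * p 1 + 4 * p 2 with hF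
  set w : Fin n → ℝ := fun y => μ 0 y - 2 * μ 1 y + 4 * μ 2 y with hw
  -- F of a mulVec
  have hFmv : ∀ a : Fin n → ℝ, F (μ.mulVec a) = ∑ y, a y * w y := by
    intro a
    simp only [hF, hw, Matrix.mulVec, dotProduct]
    rw [Finset.mul_sum, Finset.mul_sum, ← Finset.sum_sub_distrib, ← Finset.sum_add_distrib]
    exact Finset.sum_congr rfl fun y _ => by ring
  -- termwise bound
  have hterm : ∀ (c v : ℝ), 0 ≤ c → c ≤ 1 → c * v ≤ max 0 v := by
    intro c v h0 h1
    rcases le_total 0 v with h | h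
    · calc c * v ≤ 1 * v := by nlinarith
        _ = v := one_mul v
        _ ≤ max 0 v := le_max_right 0 v
    · exact (mul_nonpos_of_nonneg_of_nonpos h0 h).trans (le_max_left 0 v)
  -- P,Q,R in the zonotope of μ, with F = 3
  have hP : (![(2:ℝ)/3, 1/6, 2/3]) ∈ zonotope μ := heq ▸ ⟨memP1, memP2⟩
  have hQ : (![(1:ℝ)/3, 1/3, 5/6]) ∈ zonotope μ := heq ▸ ⟨memQ1, memQ2⟩
  have hR : (![(1:ℝ), 1, 1]) ∈ zonotope μ := heq ▸ ⟨memR1, memR2⟩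
  -- the maximum of F on zonotope μ equals ∑ max 0 (w y) and equals 3
  have hWle : (∑ y, max 0 (w y)) ≤ 3 := by
    classical
    set β : Fin n → ℝ := fun y => if 0 < w y then 1 else 0 with hβ
    have hmem : μ.mulVec β ∈ zonotope κ₁ ∩ zonotope κ₂ := by
      rw [heq]
      exact ⟨β, fun y => by by_cases h : 0 < w y <;> simp [hβ, h], rfl⟩
    have h1 := max_on_Z1 _ hmem.1
    have h2 : F (μ.mulVec β) = ∑ y, max 0 (w y) := by
      rw [hFmv]
      refine Finset.sum_congr rfl fun y _ => ?_
      by_cases h : 0 < w y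
      · simp [hβ, h, max_eq_right h.le]
      · simp [hβ, h, max_eq_left (not_lt.mp h)]
    rw [← h2]
    exact h1
  have hWge : 3 ≤ ∑ y, max 0 (w y) := by
    obtain ⟨α, hα, hPα⟩ := hP
    have h3 : F (![(2:ℝ)/3, 1/6, 2/3]) = 3 := by norm_num [hF, Matrix.cons_val_two]
    rw [hPα, hFmv] at h3
    calc (3:ℝ) = ∑ y, α y * w y := h3.symm
      _ ≤ ∑ y, max 0 (w y) :=
          Finset.sum_le_sum fun y _ => hterm (α y) (w y) (hα y).1 (hα y).2
  have hW : (∑ y, max 0 (w y)) = 3 := le_antisymm hWle hWge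
  classical
  -- the reflection center coefficients
  set τ : Fin n → ℝ := fun y => if 0 < w y then 2 else if w y < 0 then 0 else 1 with hτ
  set t : Fin 3 → ℝ := μ.mulVec τ with ht
  have hFt : F t = 6 := by
    rw [ht, hFmv]
    have : ∀ y : Fin n, τ y * w y = 2 * max 0 (w y) := by
      intro y
      by_cases h : 0 < w y
      · simp [hτ, h, max_eq_right h.le]
      · by_cases h' : w y < 0
        · simp [hτ, h, h', max_eq_left (not_lt.mp h)]
        · have hz : w y = 0 := le_antisymm (not_lt.mp h) (not_lt.mp h')
          simp [hτ, h, h', hz]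
    rw [Finset.sum_congr rfl fun y _ => this y, ← Finset.mul_sum, hW]
    norm_num
  -- central symmetry of the face
  have sym : ∀ p : Fin 3 → ℝ, p ∈ zonotope μ → F p = 3 →
      (t - p ∈ zonotope κ₁ ∩ zonotope κ₂ ∧ F (t - p) = 3) := by
    intro p hp hfp
    obtain ⟨a, ha, hpa⟩ := hp
    rw [hpa, hFmv] at hfp
    have hle : ∀ y ∈ Finset.univ, a y * w y ≤ max 0 (w y) :=
      fun y _ => hterm (a y) (w y) (ha y).1 (ha y).2
    have heqterm : ∀ y : Fin n, a y * w y = max 0 (w y) := by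
      intro y
      have := (Finset.sum_eq_sum_iff_of_le hle).mp (by rw [hfp, hW])
      exact this y (Finset.mem_univ y)
    have hcoef : ∀ y, τ y - a y ∈ Set.Icc (0:ℝ) 1 := by
      intro y
      have h := heqterm y
      by_cases hy : 0 < w y
      · have hww : a y * w y = w y := by rw [h, max_eq_right hy.le]
        have h1 : a y = 1 :=
          mul_right_cancel₀ (ne_of_gt hy) (by rw [one_mul]; exact hww)
        norm_num [hτ, hy, h1]
      · by_cases hy' : w y < 0
        · have h0 : a y = 0 := by
            have : a y * w y = 0 := by rw [h, max_eq_left (not_lt.mp hy)]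
            exact (mul_eq_zero.mp this).resolve_right (ne_of_lt hy')
          simp [hτ, hy, hy', h0]
        · constructor <;> simp [hτ, hy, hy'] <;> linarith [(ha y).1, (ha y).2]
    have hsub : t - p = μ.mulVec (τ - a) := by
      rw [ht, hpa, Matrix.mulVec_sub]
    have hmemμ : t - p ∈ zonotope μ := ⟨τ - a, fun y => hcoef y, hsub⟩
    refine ⟨heq ▸ hmemμ, ?_⟩
    have : F (t - p) = F t - F p := by
      simp [hF, Pi.sub_apply]; ring
    rw [this, hFt, hpa, hFmv, hfp]
    norm_num
  -- apply to the three vertices of the triangle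
  have hFP : F (![(2:ℝ)/3, 1/6, 2/3]) = 3 := by norm_num [hF, Matrix.cons_val_two]
  have hFQ : F (![(1:ℝ)/3, 1/3, 5/6]) = 3 := by norm_num [hF, Matrix.cons_val_two]
  have hFR : F (![(1:ℝ), 1, 1]) = 3 := by norm_num [hF, Matrix.cons_val_two]
  obtain ⟨⟨hP1', hP2'⟩, hFP'⟩ := sym _ hP hFP
  obtain ⟨⟨hQ1', hQ2'⟩, hFQ'⟩ := sym _ hQ hFQ
  obtain ⟨⟨hR1', hR2'⟩, hFR'⟩ := sym _ hR hFR
  have bP := face_bounds _ hP1' hP2' (by simpa [hF, -Matrix.sub_cons, Matrix.cons_val_two] using hFP')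
  have bQ := face_bounds _ hQ1' hQ2' (by simpa [hF, -Matrix.sub_cons, Matrix.cons_val_two] using hFQ')
  have bR := face_bounds _ hR1' hR2' (by simpa [hF, -Matrix.sub_cons, Matrix.cons_val_two] using hFR')
  simp only [Pi.sub_apply] at bP bQ bR
  norm_num [Matrix.cons_val_zero, Matrix.cons_val_one, Matrix.cons_val_two] at bP bQ bR
  obtain ⟨bP1, bP2, bP3⟩ := bP
  obtain ⟨bQ1, bQ2, bQ3⟩ := bQ
  obtain ⟨bR1, bR2, bR3⟩ := bR
  linarith
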